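/- Let B be a finite bipartite graph with parts X and Y, and let G be the graph obtained from B by adding all edges between distinct vertices of X, all edges between distinct vertices of Y, and two new vertices x and y, where x is adjacent exactly to all vertices of X and y is adjacent exactly to all vertices of Y. Then B is the line bigraph of two graphs H1 = (V, E1) and H2 = (V, E2) on a common vertex set V with E1 ∩ E2 = ∅ if and only if G is a 2-color-line graph. -/

import Mathlib

open SimpleGraph

/-- The color-line graph `CL(H)` of an edge-colored graph `(H, φ)`: vertices are the edges
of `H`, and two distinct edges are adjacent iff they share an endpoint or have equal colors. -/
def colorLineGraph {V C : Type*} (H : SimpleGraph V) (φ : H.edgeSet → C) :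
    SimpleGraph H.edgeSet where
  Adj e f := e ≠ f ∧
    ((∃ v, v ∈ (e : Sym2 V) ∧ v ∈ (f : Sym2 V)) ∨ φ e = φ f)
  symm := by
    constructor
    rintro e f ⟨hne, h⟩
    refine ⟨hne.symm, ?_⟩
    rcases h with ⟨v, hv1, hv2⟩ | h
    · exact Or.inl ⟨v, hv2, hv1⟩
    · exact Or.inr h.symm
  loopless := by constructor; rintro e ⟨hne, -⟩; exact hne rfl

/-- An edge coloring is proper if distinct edges sharing an endpoint get distinct colors. -/
def IsProperEdgeColoring {V C : Type*} (H : SimpleGraph V) (φ : H.edgeSet → C) : Prop :=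
  ∀ e f : H.edgeSet, e ≠ f → (∃ v, v ∈ (e : Sym2 V) ∧ v ∈ (f : Sym2 V)) → φ e ≠ φ f

/-- `G` is a color-line graph: `G ≅ CL(H)` for some finite edge-colored graph `H`. -/
def IsColorLineGraph {α : Type*} (G : SimpleGraph α) : Prop :=
  ∃ (V C : Type) (_ : Fintype V) (H : SimpleGraph V) (φ : H.edgeSet → C),
    Nonempty (G ≃g colorLineGraph H φ)

/-- `G` is a proper color-line graph: `G ≅ CL(H)` for some finite properly
edge-colored graph `H`. -/
def IsProperColorLineGraph {α : Type*} (G : SimpleGraph α) : Prop :=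
  ∃ (V C : Type) (_ : Fintype V) (H : SimpleGraph V) (φ : H.edgeSet → C),
    IsProperEdgeColoring H φ ∧ Nonempty (G ≃g colorLineGraph H φ)

/-- `G` is a `k`-color-line graph: `G ≅ CL(H)` for some finite graph `H`
edge-colored with at most `k` colors. -/
def IsKColorLineGraph (k : ℕ) {α : Type*} (G : SimpleGraph α) : Prop :=
  ∃ (V : Type) (_ : Fintype V) (H : SimpleGraph V) (φ : H.edgeSet → Fin k),
    Nonempty (G ≃g colorLineGraph H φ)

/-- `G` is a proper `k`-color-line graph: `G ≅ CL(H)` for some finite graph `H`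
properly edge-colored with at most `k` colors. -/
def IsProperKColorLineGraph (k : ℕ) {α : Type*} (G : SimpleGraph α) : Prop :=
  ∃ (V : Type) (_ : Fintype V) (H : SimpleGraph V) (φ : H.edgeSet → Fin k),
    IsProperEdgeColoring H φ ∧ Nonempty (G ≃g colorLineGraph H φ)

/-- `G` is a line graph: `G ≅ L(H)` for some finite graph `H`. -/
def IsLineGraph {α : Type*} (G : SimpleGraph α) : Prop :=
  ∃ (V : Type) (_ : Fintype V) (H : SimpleGraph V), Nonempty (G ≃g H.lineGraph)

/-- The line bigraph of two graphs `H₁`, `H₂` on a common vertex set: its vertices are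
the disjoint union `E(H₁) ⊕ E(H₂)`, and `e₁ ∈ E(H₁)` is adjacent to `e₂ ∈ E(H₂)` iff
they share an endpoint; there are no edges inside `E(H₁)` or inside `E(H₂)`. -/
def lineBigraph {V : Type*} (H₁ H₂ : SimpleGraph V) :
    SimpleGraph (H₁.edgeSet ⊕ H₂.edgeSet) where
  Adj u v := ∃ (e₁ : H₁.edgeSet) (e₂ : H₂.edgeSet),
      (∃ x, x ∈ (e₁ : Sym2 V) ∧ x ∈ (e₂ : Sym2 V)) ∧
      ((u = Sum.inl e₁ ∧ v = Sum.inr e₂) ∨ (u = Sum.inr e₂ ∧ v = Sum.inl e₁))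
  symm := by
    constructor
    rintro u v ⟨e₁, e₂, hx, h | h⟩
    · exact ⟨e₁, e₂, hx, Or.inr ⟨h.2, h.1⟩⟩
    · exact ⟨e₁, e₂, hx, Or.inl ⟨h.2, h.1⟩⟩
  loopless := by
    constructor
    rintro u ⟨e₁, e₂, hx, ⟨h1, h2⟩ | ⟨h1, h2⟩⟩ <;> rw [h1] at h2 <;> simp at h2

/-- The ordered adjacency cases used to build the augmented graph `G` from a bipartite
graph `B` with parts `X`, `Y`: all pairs inside `X`, all pairs inside `Y`, the edges of
`B`, the new vertex `x = Sum.inr 0` joined to `X`, and `y = Sum.inr 1` joined to `Y`. -/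
def augRel {X Y : Type*} (B : SimpleGraph (X ⊕ Y)) :
    (X ⊕ Y) ⊕ Fin 2 → (X ⊕ Y) ⊕ Fin 2 → Prop := fun u v =>
  (∃ a a' : X, u = Sum.inl (Sum.inl a) ∧ v = Sum.inl (Sum.inl a')) ∨
  (∃ b b' : Y, u = Sum.inl (Sum.inr b) ∧ v = Sum.inl (Sum.inr b')) ∨
  (∃ p q : X ⊕ Y, u = Sum.inl p ∧ v = Sum.inl q ∧ B.Adj p q) ∨
  (∃ a : X, u = Sum.inl (Sum.inl a) ∧ v = Sum.inr 0) ∨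
  (∃ b : Y, u = Sum.inl (Sum.inr b) ∧ v = Sum.inr 1)

/-- The graph `G` obtained from a bipartite graph `B` with parts `X`, `Y` by completing
`X` and `Y` to cliques and adding two new vertices `x`, `y`, with `x` adjacent exactly
to the vertices of `X` and `y` adjacent exactly to the vertices of `Y`. -/
def augGraph {X Y : Type*} (B : SimpleGraph (X ⊕ Y)) :
    SimpleGraph ((X ⊕ Y) ⊕ Fin 2) where
  Adj u v := u ≠ v ∧ (augRel B u v ∨ augRel B v u)
  symm := by constructor; rintro u v ⟨hne, h⟩; exact ⟨hne.symm, h.symm⟩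
  loopless := by constructor; rintro u ⟨hne, -⟩; exact hne rfl


section Aux

variable {X Y : Type} {B : SimpleGraph (X ⊕ Y)}

lemma aug_adj_xx (a a' : X) :
    (augGraph B).Adj (Sum.inl (Sum.inl a)) (Sum.inl (Sum.inl a')) ↔ a ≠ a' := by
  constructor
  · rintro ⟨hne, -⟩ rfl; exact hne rfl
  · intro h
    exact ⟨by simp [h], Or.inl (Or.inl ⟨a, a', rfl, rfl⟩)⟩

lemma aug_adj_yy (b b' : Y) :
    (augGraph B).Adj (Sum.inl (Sum.inr b)) (Sum.inl (Sum.inr b')) ↔ b ≠ b' := by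
  constructor
  · rintro ⟨hne, -⟩ rfl; exact hne rfl
  · intro h
    exact ⟨by simp [h], Or.inl (Or.inr (Or.inl ⟨b, b', rfl, rfl⟩))⟩

lemma aug_adj_xy (a : X) (b : Y) :
    (augGraph B).Adj (Sum.inl (Sum.inl a)) (Sum.inl (Sum.inr b)) ↔ B.Adj (Sum.inl a) (Sum.inr b) := by
  constructor
  · rintro ⟨hne, h | h⟩ <;>
      rcases h with ⟨_,_,h1,h2⟩|⟨_,_,h1,h2⟩|⟨p,q,h1,h2,h3⟩|⟨_,h1,h2⟩|⟨_,h1,h2⟩ <;>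
      simp_all <;> first | exact h3 | exact h3.symm
  · intro h
    exact ⟨by simp, Or.inl (Or.inr (Or.inr (Or.inl ⟨Sum.inl a, Sum.inr b, rfl, rfl, h⟩)))⟩

lemma aug_adj_x0 (a : X) :
    (augGraph B).Adj (Sum.inl (Sum.inl a)) (Sum.inr 0) :=
  ⟨by simp, Or.inl (Or.inr (Or.inr (Or.inr (Or.inl ⟨a, rfl, rfl⟩))))⟩

lemma aug_adj_y1 (b : Y) :
    (augGraph B).Adj (Sum.inl (Sum.inr b)) (Sum.inr 1) :=
  ⟨by simp, Or.inl (Or.inr (Or.inr (Or.inr (Or.inr ⟨b, rfl, rfl⟩))))⟩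

lemma aug_nadj_x1 (a : X) :
    ¬ (augGraph B).Adj (Sum.inl (Sum.inl a)) (Sum.inr 1) := by
  rintro ⟨hne, h | h⟩ <;> rcases h with h|h|h|h|h <;> simp_all [augRel]

lemma aug_nadj_y0 (b : Y) :
    ¬ (augGraph B).Adj (Sum.inl (Sum.inr b)) (Sum.inr 0) := by
  rintro ⟨hne, h | h⟩ <;> rcases h with h|h|h|h|h <;> simp_all [augRel]

lemma aug_nadj_01 :
    ¬ (augGraph B).Adj (Sum.inr 0 : (X ⊕ Y) ⊕ Fin 2) (Sum.inr 1) := by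
  rintro ⟨hne, h | h⟩ <;> rcases h with h|h|h|h|h <;> simp_all [augRel]

end Aux
section Aux2

lemma shares_map_inl {V W : Type*} (s t : Sym2 V) :
    (∃ v, v ∈ Sym2.map (Sum.inl : V → V ⊕ W) s ∧ v ∈ Sym2.map Sum.inl t) ↔
      ∃ v, v ∈ s ∧ v ∈ t := by
  constructor
  · rintro ⟨v, hs, ht⟩
    rw [Sym2.mem_map] at hs ht
    obtain ⟨a, ha, rfl⟩ := hs
    obtain ⟨b, hb, hba⟩ := ht
    cases Sum.inl.inj hba
    exact ⟨a, ha, hb⟩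
  · rintro ⟨v, hs, ht⟩
    exact ⟨Sum.inl v, Sym2.mem_map.2 ⟨v, hs, rfl⟩, Sym2.mem_map.2 ⟨v, ht, rfl⟩⟩

lemma not_shares_map_inl_inr {V W : Type*} (s : Sym2 V) (i j : W) :
    ¬ ∃ v, v ∈ Sym2.map (Sum.inl : V → V ⊕ W) s ∧
        v ∈ (s(Sum.inr i, Sum.inr j) : Sym2 (V ⊕ W)) := by
  rintro ⟨v, hs, ht⟩
  rw [Sym2.mem_map] at hs
  obtain ⟨a, -, rfl⟩ := hs
  simp at ht

lemma map_inl_ne_inr {V W : Type*} (s : Sym2 V) (i j : W) :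
    Sym2.map (Sum.inl : V → V ⊕ W) s ≠ s(Sum.inr i, Sum.inr j) := by
  intro h
  have : (Sum.inr i : V ⊕ W) ∈ Sym2.map (Sum.inl : V → V ⊕ W) s := by
    rw [h]; simp
  rw [Sym2.mem_map] at this
  obtain ⟨a, -, ha⟩ := this
  simp at ha

lemma not_shares_inr_inr {V : Type*} :
    ¬ ∃ v, v ∈ (s(Sum.inr 0, Sum.inr 1) : Sym2 (V ⊕ Fin 4)) ∧
        v ∈ (s(Sum.inr 2, Sum.inr 3) : Sym2 (V ⊕ Fin 4)) := by
  rintro ⟨v, hs, ht⟩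
  simp at hs ht
  rcases hs with rfl | rfl <;> rcases ht with h | h <;>
    first
      | exact absurd (Sum.inr.inj h) (by decide)
      | simp_all

lemma special_ne {V : Type*} :
    (s(Sum.inr 0, Sum.inr 1) : Sym2 (V ⊕ Fin 4)) ≠ s(Sum.inr 2, Sum.inr 3) := by
  intro h
  rw [Sym2.eq_iff] at h
  rcases h with ⟨h, -⟩ | ⟨h, -⟩ <;> exact absurd (Sum.inr.inj h) (by decide)

lemma lineBigraph_adj_inl_inr {V : Type*} {H₁ H₂ : SimpleGraph V}
    (e₁ : H₁.edgeSet) (e₂ : H₂.edgeSet) :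
    (lineBigraph H₁ H₂).Adj (Sum.inl e₁) (Sum.inr e₂) ↔
      ∃ x, x ∈ (e₁ : Sym2 V) ∧ x ∈ (e₂ : Sym2 V) := by
  constructor
  · rintro ⟨f₁, f₂, hx, ⟨h1, h2⟩ | ⟨h1, h2⟩⟩
    · cases Sum.inl.inj h1; cases Sum.inr.inj h2; exact hx
    · simp at h1
  · intro hx; exact ⟨e₁, e₂, hx, Or.inl ⟨rfl, rfl⟩⟩

lemma lineBigraph_not_adj_inl_inl {V : Type*} {H₁ H₂ : SimpleGraph V}
    (e e' : H₁.edgeSet) :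
    ¬ (lineBigraph H₁ H₂).Adj (Sum.inl e) (Sum.inl e') := by
  rintro ⟨f₁, f₂, -, ⟨h1, h2⟩ | ⟨h1, h2⟩⟩ <;> simp_all

lemma lineBigraph_not_adj_inr_inr {V : Type*} {H₁ H₂ : SimpleGraph V}
    (e e' : H₂.edgeSet) :
    ¬ (lineBigraph H₁ H₂).Adj (Sum.inr e) (Sum.inr e') := by
  rintro ⟨f₁, f₂, -, ⟨h1, h2⟩ | ⟨h1, h2⟩⟩ <;> simp_all

end Aux2
section Forward

variable {V : Type} (H₁ H₂ : SimpleGraph V)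

/-- Edge set underlying the big graph used in the forward direction. -/
def bigSet : Set (Sym2 (V ⊕ Fin 4)) :=
  Sym2.map Sum.inl '' (H₁ ⊔ H₂).edgeSet ∪
    {s(Sum.inr 0, Sum.inr 1), s(Sum.inr 2, Sum.inr 3)}

def bigGraph : SimpleGraph (V ⊕ Fin 4) := SimpleGraph.fromEdgeSet (bigSet H₁ H₂)

lemma mem_bigGraph_edgeSet {s : Sym2 (V ⊕ Fin 4)} :
    s ∈ (bigGraph H₁ H₂).edgeSet ↔ s ∈ bigSet H₁ H₂ := by
  rw [bigGraph, SimpleGraph.edgeSet_fromEdgeSet]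
  refine ⟨fun h => h.1, fun h => ⟨h, ?_⟩⟩
  rcases h with ⟨t, ht, rfl⟩ | h
  · intro hd
    exact (H₁ ⊔ H₂).not_isDiag_of_mem_edgeSet ht
      ((Sym2.isDiag_map Sum.inl_injective).1 hd)
  · simp only [Set.mem_insert_iff, Set.mem_singleton_iff] at h
    rcases h with rfl | rfl <;> simp [Sym2.mk_isDiag_iff]

def edge1 (e : H₁.edgeSet) : (bigGraph H₁ H₂).edgeSet :=
  ⟨Sym2.map Sum.inl e, (mem_bigGraph_edgeSet H₁ H₂).2
    (Or.inl ⟨e, by rw [SimpleGraph.edgeSet_sup]; exact Or.inl e.2, rfl⟩)⟩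

def edge2 (e : H₂.edgeSet) : (bigGraph H₁ H₂).edgeSet :=
  ⟨Sym2.map Sum.inl e, (mem_bigGraph_edgeSet H₁ H₂).2
    (Or.inl ⟨e, by rw [SimpleGraph.edgeSet_sup]; exact Or.inr e.2, rfl⟩)⟩

def spec0 : (bigGraph H₁ H₂).edgeSet :=
  ⟨s(Sum.inr 0, Sum.inr 1), (mem_bigGraph_edgeSet H₁ H₂).2 (Or.inr (Or.inl rfl))⟩

def spec1 : (bigGraph H₁ H₂).edgeSet :=
  ⟨s(Sum.inr 2, Sum.inr 3), (mem_bigGraph_edgeSet H₁ H₂).2 (Or.inr (Or.inr rfl))⟩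

open Classical in
noncomputable def bigColor : (bigGraph H₁ H₂).edgeSet → Fin 2 := fun e =>
  if (∃ t ∈ H₁.edgeSet, Sym2.map Sum.inl t = (e : Sym2 (V ⊕ Fin 4))) ∨
      (e : Sym2 (V ⊕ Fin 4)) = s(Sum.inr 0, Sum.inr 1) then 0 else 1

lemma edge1_injective : Function.Injective (edge1 H₁ H₂) := by
  intro e f h
  rw [Subtype.ext_iff] at h
  exact Subtype.ext (Sym2.map.injective Sum.inl_injective h)

lemma edge2_injective : Function.Injective (edge2 H₁ H₂) := by
  intro e f h
  rw [Subtype.ext_iff] at h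
  exact Subtype.ext (Sym2.map.injective Sum.inl_injective h)

variable {H₁ H₂} (hd : Disjoint H₁.edgeSet H₂.edgeSet)

include hd in
lemma edge1_ne_edge2 (e : H₁.edgeSet) (f : H₂.edgeSet) :
    edge1 H₁ H₂ e ≠ edge2 H₁ H₂ f := by
  intro h
  rw [Subtype.ext_iff] at h
  have : (e : Sym2 V) = (f : Sym2 V) := Sym2.map.injective Sum.inl_injective h
  exact Set.disjoint_left.1 hd e.2 (this ▸ f.2)

lemma color_edge1 (e : H₁.edgeSet) : bigColor H₁ H₂ (edge1 H₁ H₂ e) = 0 := by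
  unfold bigColor
  exact if_pos (Or.inl ⟨e, e.2, rfl⟩)

include hd in
lemma color_edge2 (e : H₂.edgeSet) : bigColor H₁ H₂ (edge2 H₁ H₂ e) = 1 := by
  unfold bigColor
  refine if_neg ?_
  rintro (⟨t, ht, hmap⟩ | h)
  · have : t = (e : Sym2 V) := Sym2.map.injective Sum.inl_injective hmap
    exact Set.disjoint_left.1 hd (this ▸ ht) e.2
  · exact map_inl_ne_inr _ _ _ h

lemma color_spec0 : bigColor H₁ H₂ (spec0 H₁ H₂) = 0 := by
  unfold bigColor
  exact if_pos (Or.inr rfl)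

lemma color_spec1 : bigColor H₁ H₂ (spec1 H₁ H₂) = 1 := by
  unfold bigColor
  refine if_neg ?_
  rintro (⟨t, ht, hmap⟩ | h)
  · exact map_inl_ne_inr _ _ _ hmap
  · exact special_ne h.symm

end Forward
section ForwardCL

variable {V : Type} {H₁ H₂ : SimpleGraph V}


lemma cl_adj_e1_e1 (e f : H₁.edgeSet) :
    (colorLineGraph (bigGraph H₁ H₂) (bigColor H₁ H₂)).Adj (edge1 H₁ H₂ e) (edge1 H₁ H₂ f) ↔ e ≠ f := by
  constructor
  · rintro ⟨hne, -⟩ rfl; exact hne rfl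
  · intro h
    exact ⟨fun hh => h (edge1_injective H₁ H₂ hh),
      Or.inr (by rw [color_edge1, color_edge1])⟩

lemma cl_adj_e2_e2 (hd : Disjoint H₁.edgeSet H₂.edgeSet) (e f : H₂.edgeSet) :
    (colorLineGraph (bigGraph H₁ H₂) (bigColor H₁ H₂)).Adj (edge2 H₁ H₂ e) (edge2 H₁ H₂ f) ↔ e ≠ f := by
  constructor
  · rintro ⟨hne, -⟩ rfl; exact hne rfl
  · intro h
    exact ⟨fun hh => h (edge2_injective H₁ H₂ hh),
      Or.inr (by rw [color_edge2 hd, color_edge2 hd])⟩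

lemma cl_adj_e1_e2 (hd : Disjoint H₁.edgeSet H₂.edgeSet)
    (e : H₁.edgeSet) (f : H₂.edgeSet) :
    (colorLineGraph (bigGraph H₁ H₂) (bigColor H₁ H₂)).Adj (edge1 H₁ H₂ e) (edge2 H₁ H₂ f) ↔
      ∃ x, x ∈ (e : Sym2 V) ∧ x ∈ (f : Sym2 V) := by
  constructor
  · rintro ⟨hne, hsh | hc⟩
    · exact (shares_map_inl _ _).1 hsh
    · rw [color_edge1, color_edge2 hd] at hc
      exact absurd hc (by decide)
  · intro h
    exact ⟨edge1_ne_edge2 hd e f, Or.inl ((shares_map_inl _ _).2 h)⟩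

lemma cl_adj_e1_s0 (e : H₁.edgeSet) : (colorLineGraph (bigGraph H₁ H₂) (bigColor H₁ H₂)).Adj (edge1 H₁ H₂ e) (spec0 H₁ H₂) :=
  ⟨fun h => map_inl_ne_inr _ 0 1 (congrArg Subtype.val h),
    Or.inr (by rw [color_edge1, color_spec0])⟩

lemma cl_adj_e2_s1 (hd : Disjoint H₁.edgeSet H₂.edgeSet) (e : H₂.edgeSet) :
    (colorLineGraph (bigGraph H₁ H₂) (bigColor H₁ H₂)).Adj (edge2 H₁ H₂ e) (spec1 H₁ H₂) :=
  ⟨fun h => map_inl_ne_inr _ 2 3 (congrArg Subtype.val h),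
    Or.inr (by rw [color_edge2 hd, color_spec1])⟩

lemma cl_nadj_e1_s1 (e : H₁.edgeSet) : ¬ (colorLineGraph (bigGraph H₁ H₂) (bigColor H₁ H₂)).Adj (edge1 H₁ H₂ e) (spec1 H₁ H₂) := by
  rintro ⟨hne, hsh | hc⟩
  · exact not_shares_map_inl_inr _ _ _ hsh
  · rw [color_edge1, color_spec1] at hc
    exact absurd hc (by decide)

lemma cl_nadj_e2_s0 (hd : Disjoint H₁.edgeSet H₂.edgeSet) (e : H₂.edgeSet) :
    ¬ (colorLineGraph (bigGraph H₁ H₂) (bigColor H₁ H₂)).Adj (edge2 H₁ H₂ e) (spec0 H₁ H₂) := by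
  rintro ⟨hne, hsh | hc⟩
  · exact not_shares_map_inl_inr _ _ _ hsh
  · rw [color_edge2 hd, color_spec0] at hc
    exact absurd hc (by decide)

lemma cl_nadj_s0_s1 : ¬ (colorLineGraph (bigGraph H₁ H₂) (bigColor H₁ H₂)).Adj (spec0 H₁ H₂) (spec1 H₁ H₂) := by
  rintro ⟨hne, hsh | hc⟩
  · exact not_shares_inr_inr hsh
  · rw [color_spec0, color_spec1] at hc
    exact absurd hc (by decide)

end ForwardCL

/-- A bipartite graph `B` with parts `X`, `Y` is the line bigraph of two graphs
`H₁ = (V, E₁)`, `H₂ = (V, E₂)` with `E₁ ∩ E₂ = ∅` iff the augmented graph `G` is a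
2-color-line graph. -/
theorem lineBigraph_iff_twoColorLine {X Y : Type} [Fintype X] [Fintype Y]
    (B : SimpleGraph (X ⊕ Y))
    (hbip : ∀ u v : X ⊕ Y, B.Adj u v →
      (u.isLeft ∧ v.isRight) ∨ (u.isRight ∧ v.isLeft)) :
    (∃ (V : Type) (_ : Fintype V) (H₁ H₂ : SimpleGraph V),
        Disjoint H₁.edgeSet H₂.edgeSet ∧
        ∃ ψ : B ≃g lineBigraph H₁ H₂,
          (∀ a : X, ∃ e : H₁.edgeSet, ψ (Sum.inl a) = Sum.inl e) ∧
          (∀ b : Y, ∃ e : H₂.edgeSet, ψ (Sum.inr b) = Sum.inr e)) ↔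
      IsKColorLineGraph 2 (augGraph B) := by
  constructor
  · rintro ⟨V, finV, H₁, H₂, hd, ψ, hX, hY⟩
    haveI := finV
    classical
    refine ⟨V ⊕ Fin 4, inferInstance, bigGraph H₁ H₂, bigColor H₁ H₂, ⟨?_⟩⟩
    set F : (X ⊕ Y) ⊕ Fin 2 → (bigGraph H₁ H₂).edgeSet :=
      Sum.elim (fun z => Sum.elim (edge1 H₁ H₂) (edge2 H₁ H₂) (ψ z))
        (fun i => if i = 0 then spec0 H₁ H₂ else spec1 H₁ H₂) with hF
    have hFa : ∀ a : X, ∃ e : H₁.edgeSet, ψ (Sum.inl a) = Sum.inl e ∧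
        F (Sum.inl (Sum.inl a)) = edge1 H₁ H₂ e := by
      intro a
      obtain ⟨e, he⟩ := hX a
      exact ⟨e, he, by simp [hF, he]⟩
    have hFb : ∀ b : Y, ∃ e : H₂.edgeSet, ψ (Sum.inr b) = Sum.inr e ∧
        F (Sum.inl (Sum.inr b)) = edge2 H₁ H₂ e := by
      intro b
      obtain ⟨e, he⟩ := hY b
      exact ⟨e, he, by simp [hF, he]⟩
    have hF0 : F (Sum.inr 0) = spec0 H₁ H₂ := by simp [hF]
    have hF1 : F (Sum.inr 1) = spec1 H₁ H₂ := by simp [hF]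
    have hval : ∀ z, ∃ t : Sym2 V,
        (F (Sum.inl z) : Sym2 (V ⊕ Fin 4)) = Sym2.map Sum.inl t := by
      intro z
      cases hz : ψ z with
      | inl e => exact ⟨e, by simp [hF, hz, edge1]⟩
      | inr e => exact ⟨e, by simp [hF, hz, edge2]⟩
    have hspecval : ∀ i : Fin 2, ∃ j k : Fin 4,
        (F (Sum.inr i) : Sym2 (V ⊕ Fin 4)) = s(Sum.inr j, Sum.inr k) := by
      intro i
      have h2 : i = 0 ∨ i = 1 := by omega
      rcases h2 with rfl | rfl
      · exact ⟨0, 1, by rw [hF0]; rfl⟩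
      · exact ⟨2, 3, by rw [hF1]; rfl⟩
    have hcross : ∀ z i, F (Sum.inl z) ≠ F (Sum.inr i) := by
      intro z i h
      obtain ⟨t, ht⟩ := hval z
      obtain ⟨j, k, hjk⟩ := hspecval i
      exact map_inl_ne_inr t j k (ht ▸ hjk ▸ congrArg Subtype.val h)
    have helim : Function.Injective (Sum.elim (edge1 H₁ H₂) (edge2 H₁ H₂)) := by
      rintro (e | e) (f | f) h
      · exact congrArg Sum.inl (edge1_injective H₁ H₂ h)
      · exact absurd h (edge1_ne_edge2 hd e f)
      · exact absurd h.symm (edge1_ne_edge2 hd f e)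
      · exact congrArg Sum.inr (edge2_injective H₁ H₂ h)
    have hinj : Function.Injective F := by
      rintro (z | i) (z' | i') h
      · exact congrArg Sum.inl (ψ.injective (helim h))
      · exact absurd h (hcross z i')
      · exact absurd h.symm (hcross z' i)
      · congr 1
        have h2 : i = 0 ∨ i = 1 := by omega
        have h2' : i' = 0 ∨ i' = 1 := by omega
        rcases h2 with rfl | rfl <;> rcases h2' with rfl | rfl
        · rfl
        · rw [hF0, hF1] at h
          exact absurd (congrArg Subtype.val h) special_ne
        · rw [hF0, hF1] at h
          exact absurd (congrArg Subtype.val h.symm) special_ne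
        · rfl
    have hsurj : Function.Surjective F := by
      rintro ⟨s, hs⟩
      rcases (mem_bigGraph_edgeSet H₁ H₂).1 hs with ⟨t, ht, rfl⟩ | h
      · rw [SimpleGraph.edgeSet_sup] at ht
        rcases ht with ht | ht
        · obtain ⟨z, hz⟩ := ψ.surjective (Sum.inl ⟨t, ht⟩)
          refine ⟨Sum.inl z, ?_⟩
          rw [show F (Sum.inl z) = Sum.elim (edge1 H₁ H₂) (edge2 H₁ H₂) (ψ z) from rfl, hz]
          exact Subtype.ext rfl
        · obtain ⟨z, hz⟩ := ψ.surjective (Sum.inr ⟨t, ht⟩)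
          refine ⟨Sum.inl z, ?_⟩
          rw [show F (Sum.inl z) = Sum.elim (edge1 H₁ H₂) (edge2 H₁ H₂) (ψ z) from rfl, hz]
          exact Subtype.ext rfl
      · simp only [Set.mem_insert_iff, Set.mem_singleton_iff] at h
        rcases h with rfl | rfl
        · exact ⟨Sum.inr 0, by rw [hF0]; exact Subtype.ext rfl⟩
        · exact ⟨Sum.inr 1, by rw [hF1]; exact Subtype.ext rfl⟩
    have sym : ∀ u v, ((augGraph B).Adj u v ↔
          (colorLineGraph (bigGraph H₁ H₂) (bigColor H₁ H₂)).Adj (F u) (F v)) →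
        ((augGraph B).Adj v u ↔
          (colorLineGraph (bigGraph H₁ H₂) (bigColor H₁ H₂)).Adj (F v) (F u)) :=
      fun u v h => ⟨fun ha => (h.1 ha.symm).symm, fun ha => (h.2 ha.symm).symm⟩
    have c1 : ∀ a a' : X, (augGraph B).Adj (Sum.inl (Sum.inl a)) (Sum.inl (Sum.inl a')) ↔
        (colorLineGraph (bigGraph H₁ H₂) (bigColor H₁ H₂)).Adj
          (F (Sum.inl (Sum.inl a))) (F (Sum.inl (Sum.inl a'))) := by
      intro a a'
      obtain ⟨e, he, hFe⟩ := hFa a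
      obtain ⟨e', he', hFe'⟩ := hFa a'
      rw [hFe, hFe', aug_adj_xx, cl_adj_e1_e1]
      constructor
      · intro h heq
        exact h (Sum.inl.inj (ψ.injective (by rw [he, he', heq])))
      · intro h heq
        subst heq
        rw [he] at he'
        exact h (Sum.inl.inj he')
    have c2 : ∀ (a : X) (b : Y),
        (augGraph B).Adj (Sum.inl (Sum.inl a)) (Sum.inl (Sum.inr b)) ↔
        (colorLineGraph (bigGraph H₁ H₂) (bigColor H₁ H₂)).Adj
          (F (Sum.inl (Sum.inl a))) (F (Sum.inl (Sum.inr b))) := by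
      intro a b
      obtain ⟨e, he, hFe⟩ := hFa a
      obtain ⟨f, hf, hFf⟩ := hFb b
      rw [hFe, hFf, aug_adj_xy, cl_adj_e1_e2 hd, ← lineBigraph_adj_inl_inr,
        ← he, ← hf, ψ.map_rel_iff]
    have c3 : ∀ a : X, (augGraph B).Adj (Sum.inl (Sum.inl a)) (Sum.inr 0) ↔
        (colorLineGraph (bigGraph H₁ H₂) (bigColor H₁ H₂)).Adj
          (F (Sum.inl (Sum.inl a))) (F (Sum.inr 0)) := by
      intro a
      obtain ⟨e, he, hFe⟩ := hFa a
      rw [hFe, hF0]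
      exact iff_of_true (aug_adj_x0 a) (cl_adj_e1_s0 e)
    have c4 : ∀ a : X, (augGraph B).Adj (Sum.inl (Sum.inl a)) (Sum.inr 1) ↔
        (colorLineGraph (bigGraph H₁ H₂) (bigColor H₁ H₂)).Adj
          (F (Sum.inl (Sum.inl a))) (F (Sum.inr 1)) := by
      intro a
      obtain ⟨e, he, hFe⟩ := hFa a
      rw [hFe, hF1]
      exact iff_of_false (aug_nadj_x1 a) (cl_nadj_e1_s1 e)
    have c5 : ∀ b b' : Y, (augGraph B).Adj (Sum.inl (Sum.inr b)) (Sum.inl (Sum.inr b')) ↔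
        (colorLineGraph (bigGraph H₁ H₂) (bigColor H₁ H₂)).Adj
          (F (Sum.inl (Sum.inr b))) (F (Sum.inl (Sum.inr b'))) := by
      intro b b'
      obtain ⟨e, he, hFe⟩ := hFb b
      obtain ⟨e', he', hFe'⟩ := hFb b'
      rw [hFe, hFe', aug_adj_yy, cl_adj_e2_e2 hd]
      constructor
      · intro h heq
        exact h (Sum.inr.inj (ψ.injective (by rw [he, he', heq])))
      · intro h heq
        subst heq
        rw [he] at he'
        exact h (Sum.inr.inj he')
    have c6 : ∀ b : Y, (augGraph B).Adj (Sum.inl (Sum.inr b)) (Sum.inr 0) ↔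
        (colorLineGraph (bigGraph H₁ H₂) (bigColor H₁ H₂)).Adj
          (F (Sum.inl (Sum.inr b))) (F (Sum.inr 0)) := by
      intro b
      obtain ⟨e, he, hFe⟩ := hFb b
      rw [hFe, hF0]
      exact iff_of_false (aug_nadj_y0 b) (cl_nadj_e2_s0 hd e)
    have c7 : ∀ b : Y, (augGraph B).Adj (Sum.inl (Sum.inr b)) (Sum.inr 1) ↔
        (colorLineGraph (bigGraph H₁ H₂) (bigColor H₁ H₂)).Adj
          (F (Sum.inl (Sum.inr b))) (F (Sum.inr 1)) := by
      intro b
      obtain ⟨e, he, hFe⟩ := hFb b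
      rw [hFe, hF1]
      exact iff_of_true (aug_adj_y1 b) (cl_adj_e2_s1 hd e)
    have c8 : (augGraph B).Adj (Sum.inr 0) (Sum.inr 1) ↔
        (colorLineGraph (bigGraph H₁ H₂) (bigColor H₁ H₂)).Adj
          (F (Sum.inr 0)) (F (Sum.inr 1)) := by
      rw [hF0, hF1]
      exact iff_of_false aug_nadj_01 cl_nadj_s0_s1
    have main : ∀ u v, (augGraph B).Adj u v ↔
        (colorLineGraph (bigGraph H₁ H₂) (bigColor H₁ H₂)).Adj (F u) (F v) := by
      rintro ((a | b) | i) ((a' | b') | i')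
      · exact c1 a a'
      · exact c2 a b'
      · fin_cases i'
        · exact c3 a
        · exact c4 a
      · exact sym _ _ (c2 a' b)
      · exact c5 b b'
      · fin_cases i'
        · exact c6 b
        · exact c7 b
      · fin_cases i
        · exact sym _ _ (c3 a')
        · exact sym _ _ (c4 a')
      · fin_cases i
        · exact sym _ _ (c6 b')
        · exact sym _ _ (c7 b')
      · fin_cases i <;> fin_cases i'
        · exact iff_of_false ((augGraph B).irrefl) ((colorLineGraph _ _).irrefl)
        · exact c8
        · exact sym _ _ c8
        · exact iff_of_false ((augGraph B).irrefl) ((colorLineGraph _ _).irrefl)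
    exact ⟨Equiv.ofBijective F ⟨hinj, hsurj⟩, fun {u v} => (main u v).symm⟩
  · rintro ⟨V, finV, H, φ, ⟨f⟩⟩
    haveI := finV
    classical
    set ex : H.edgeSet := f (Sum.inr 0) with hex
    set ey : H.edgeSet := f (Sum.inr 1) with hey
    set ea : X → H.edgeSet := fun a => f (Sum.inl (Sum.inl a)) with hea
    set eb : Y → H.edgeSet := fun b => f (Sum.inl (Sum.inr b)) with heb
    have fentry : ∀ u v : (X ⊕ Y) ⊕ Fin 2, u ≠ v →
        ¬ (augGraph B).Adj u v →
        (¬ ∃ x, x ∈ (f u : Sym2 V) ∧ x ∈ (f v : Sym2 V)) ∧ φ (f u) ≠ φ (f v) := by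
      intro u v huv hadj
      have hne : f u ≠ f v := fun h => huv (f.injective h)
      have : ¬ ((∃ x, x ∈ (f u : Sym2 V) ∧ x ∈ (f v : Sym2 V)) ∨ φ (f u) = φ (f v)) := by
        intro h
        exact hadj (f.map_rel_iff.1 ⟨hne, h⟩)
      push_neg at this
      refine ⟨?_, this.2⟩
      rintro ⟨x, h1, h2⟩
      exact this.1 x h1 h2
    have hxy := fentry (Sum.inr 0) (Sum.inr 1) (by simp) aug_nadj_01
    have hay : ∀ a : X, (¬ ∃ x, x ∈ (ea a : Sym2 V) ∧ x ∈ (ey : Sym2 V)) ∧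
        φ (ea a) ≠ φ ey := fun a =>
      fentry (Sum.inl (Sum.inl a)) (Sum.inr 1) (by simp) (aug_nadj_x1 a)
    have hbx : ∀ b : Y, (¬ ∃ x, x ∈ (eb b : Sym2 V) ∧ x ∈ (ex : Sym2 V)) ∧
        φ (eb b) ≠ φ ex := fun b =>
      fentry (Sum.inl (Sum.inr b)) (Sum.inr 0) (by simp) (aug_nadj_y0 b)
    have fin2 : ∀ c c' d : Fin 2, c ≠ d → c' ≠ d → c = c' := by decide
    have hcol : ∀ (a : X) (b : Y), φ (ea a) ≠ φ (eb b) := by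
      intro a b h
      have h1 : φ (ea a) = φ ex := fin2 _ _ _ (hay a).2 hxy.2
      have h2 : φ (eb b) = φ ey := fin2 _ _ _ (hbx b).2 (Ne.symm hxy.2)
      rw [h1, h2] at h
      exact hxy.2 h
    have key : ∀ (a : X) (b : Y), B.Adj (Sum.inl a) (Sum.inr b) ↔
        ∃ x, x ∈ (ea a : Sym2 V) ∧ x ∈ (eb b : Sym2 V) := by
      intro a b
      rw [← aug_adj_xy, ← f.map_rel_iff]
      constructor
      · rintro ⟨-, h | h⟩
        · exact h
        · exact absurd h (hcol a b)
      · intro h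
        exact ⟨(fun hh => absurd (f.injective hh) (by simp)), Or.inl h⟩
    set H₁ : SimpleGraph V :=
      SimpleGraph.fromEdgeSet {s | ∃ a : X, ((ea a : H.edgeSet) : Sym2 V) = s} with hH₁
    set H₂ : SimpleGraph V :=
      SimpleGraph.fromEdgeSet {s | ∃ b : Y, ((eb b : H.edgeSet) : Sym2 V) = s} with hH₂
    have hE1 : H₁.edgeSet = {s | ∃ a : X, ((ea a : H.edgeSet) : Sym2 V) = s} := by
      rw [hH₁, SimpleGraph.edgeSet_fromEdgeSet]
      ext s
      simp only [Set.mem_diff, Set.mem_setOf_eq]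
      refine ⟨fun h => h.1, fun h => ⟨h, ?_⟩⟩
      obtain ⟨a, rfl⟩ := h
      exact H.not_isDiag_of_mem_edgeSet (ea a).2
    have hE2 : H₂.edgeSet = {s | ∃ b : Y, ((eb b : H.edgeSet) : Sym2 V) = s} := by
      rw [hH₂, SimpleGraph.edgeSet_fromEdgeSet]
      ext s
      simp only [Set.mem_diff, Set.mem_setOf_eq]
      refine ⟨fun h => h.1, fun h => ⟨h, ?_⟩⟩
      obtain ⟨b, rfl⟩ := h
      exact H.not_isDiag_of_mem_edgeSet (eb b).2
    have mem1 : ∀ a : X, ((ea a : H.edgeSet) : Sym2 V) ∈ H₁.edgeSet := by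
      intro a; rw [hE1]; exact ⟨a, rfl⟩
    have mem2 : ∀ b : Y, ((eb b : H.edgeSet) : Sym2 V) ∈ H₂.edgeSet := by
      intro b; rw [hE2]; exact ⟨b, rfl⟩
    have hdisj : Disjoint H₁.edgeSet H₂.edgeSet := by
      rw [Set.disjoint_left]
      intro s hs1 hs2
      rw [hE1] at hs1
      rw [hE2] at hs2
      obtain ⟨a, rfl⟩ := hs1
      obtain ⟨b, hb⟩ := hs2
      have : eb b = ea a := Subtype.ext hb
      cases f.injective this
    set g : X ⊕ Y → (H₁.edgeSet ⊕ H₂.edgeSet) :=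
      Sum.elim (fun a => Sum.inl ⟨((ea a : H.edgeSet) : Sym2 V), mem1 a⟩)
        (fun b => Sum.inr ⟨((eb b : H.edgeSet) : Sym2 V), mem2 b⟩) with hg
    have ginj : Function.Injective g := by
      rintro (a | b) (a' | b') h <;> simp only [hg, Sum.elim_inl, Sum.elim_inr] at h
      · congr 1
        have h' := Sum.inl.inj h
        have h'' := Subtype.ext_iff.mp h'
        have : ea a = ea a' := Subtype.ext h''
        have := f.injective this
        simpa using this
      · exact absurd h (by simp)
      · exact absurd h (by simp)
      · congr 1
        have h' := Sum.inr.inj h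
        have h'' := Subtype.ext_iff.mp h'
        have : eb b = eb b' := Subtype.ext h''
        have := f.injective this
        simpa using this
    have gsurj : Function.Surjective g := by
      rintro (⟨s, hs⟩ | ⟨s, hs⟩)
      · rw [hE1] at hs
        obtain ⟨a, rfl⟩ := hs
        exact ⟨Sum.inl a, rfl⟩
      · rw [hE2] at hs
        obtain ⟨b, rfl⟩ := hs
        exact ⟨Sum.inr b, rfl⟩
    have grel : ∀ u v, (lineBigraph H₁ H₂).Adj (g u) (g v) ↔ B.Adj u v := by
      rintro (a | b) (a' | b')
      · refine iff_of_false (lineBigraph_not_adj_inl_inl _ _) (fun h => ?_)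
        rcases hbip _ _ h with ⟨h1, h2⟩ | ⟨h1, h2⟩ <;> simp at h1 h2
      · rw [show g (Sum.inl a) = Sum.inl ⟨((ea a : H.edgeSet) : Sym2 V), mem1 a⟩ from rfl,
          show g (Sum.inr b') = Sum.inr ⟨((eb b' : H.edgeSet) : Sym2 V), mem2 b'⟩ from rfl,
          lineBigraph_adj_inl_inr]
        exact (key a b').symm
      · rw [SimpleGraph.adj_comm, B.adj_comm,
          show g (Sum.inl a') = Sum.inl ⟨((ea a' : H.edgeSet) : Sym2 V), mem1 a'⟩ from rfl,
          show g (Sum.inr b) = Sum.inr ⟨((eb b : H.edgeSet) : Sym2 V), mem2 b⟩ from rfl,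
          lineBigraph_adj_inl_inr]
        exact (key a' b).symm
      · refine iff_of_false (lineBigraph_not_adj_inr_inr _ _) (fun h => ?_)
        rcases hbip _ _ h with ⟨h1, h2⟩ | ⟨h1, h2⟩ <;> simp at h1 h2
    refine ⟨V, finV, H₁, H₂, hdisj,
      ⟨Equiv.ofBijective g ⟨ginj, gsurj⟩, fun {u v} => grel u v⟩, ?_, ?_⟩
    · intro a
      exact ⟨⟨((ea a : H.edgeSet) : Sym2 V), mem1 a⟩, rfl⟩
    · intro b
      exact ⟨⟨((eb b : H.edgeSet) : Sym2 V), mem2 b⟩, rfl⟩
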